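/- Let X and Y be Polish spaces, let d_Y be a complete compatible metric on Y, let A ⊆ X × Y be a G_δ set, and let (y_n)_{n∈ℕ} be a dense sequence in Y. Suppose G is a Polish group acting continuously on Y such that A_x is G-invariant for every x ∈ X and every G-orbit of a point y ∈ A_x is dense in A_x. Then the set R = {(x, n, ε) ∈ X × ℕ × ℚ₊ : ∃ y ∈ A_x, d_Y(y, y_n) < ε} is Borel (it is simultaneously analytic and coanalytic), and consequently proj_X(A) is Borel and A admits a Borel uniformization. -/

import Mathlib

open TopologicalSpace

open Set MeasureTheory Filter Topology

set_option linter.unusedSectionVars false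

namespace HomSel

variable {X Y G : Type} [TopologicalSpace X] [PolishSpace X] [MeasurableSpace X] [BorelSpace X]
  [MetricSpace Y] [CompleteSpace Y] [SeparableSpace Y] [MeasurableSpace Y] [BorelSpace Y]
  [Group G] [TopologicalSpace G] [IsTopologicalGroup G] [PolishSpace G]
  [MulAction G Y] [ContinuousSMul G Y]

/-- Bundled context for the homogeneous selection argument. -/
structure Ctx (X Y G : Type) [TopologicalSpace X] [MetricSpace Y]
    [Group G] [TopologicalSpace G] [MulAction G Y] where
  A : Set (X × Y)
  V : ℕ → Set (X × Y)
  hVopen : ∀ k, IsOpen (V k)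
  hAV : A = ⋂ k, V k
  hInv : ∀ (x : X) (g : G) (z : Y), (x, z) ∈ A → (x, g • z) ∈ A
  hDense : ∀ (x : X) (z w : Y), (x, z) ∈ A → (x, w) ∈ A →
      w ∈ closure (Set.range fun g : G => g • z)
  y : ℕ → Y
  hy : DenseRange y
  P : ℕ → Set X
  hPopen : ∀ r, IsOpen (P r)
  hPbasis : ∀ u : Set X, IsOpen u → ∀ x ∈ u, ∃ r, x ∈ P r ∧ P r ⊆ u
  U : ℕ → Set G
  hUopen : ∀ i, IsOpen (U i)
  hUne : ∀ i, (U i).Nonempty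
  hUbasis : ∀ w : Set G, IsOpen w → w.Nonempty → ∃ i, U i ⊆ w
  g : ℕ → G
  hg : DenseRange g

variable (C : Ctx X Y G)

/-- The basic ball coded by `e`. -/
def bl (e : ℕ × ℚ) : Set Y := Metric.ball (C.y e.1) (e.2 : ℝ)

lemma mem_bl {z : Y} {e : ℕ × ℚ} : z ∈ bl C e ↔ dist z (C.y e.1) < (e.2 : ℝ) :=
  Metric.mem_ball

/-- The `(k,i)`-th saturated open level set. -/
def T (k i : ℕ) : Set (X × Y) :=
  {p | ∃ l, C.g l ∈ C.U i ∧ (p.1, C.g l • p.2) ∈ C.V k}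

lemma A_subset_V (k : ℕ) : C.A ⊆ C.V k := by
  rw [C.hAV]; exact iInter_subset _ k

/-- (★): `A` coincides with the intersection of the saturated levels.  Uses the Baire
category theorem in `G` together with invariance of the sections. -/
lemma star : C.A = ⋂ k, ⋂ i, T C k i := by
  apply Subset.antisymm
  · intro p hp
    simp only [mem_iInter]
    intro k i
    obtain ⟨l, hl⟩ := C.hg.exists_mem_open (C.hUopen i) (C.hUne i)
    exact ⟨l, hl, A_subset_V C k (C.hInv p.1 (C.g l) p.2 hp)⟩
  · intro p hp
    simp only [mem_iInter] at hp
    letI := upgradeIsCompletelyMetrizable G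
    -- the sets of group elements pushing `p.2` into the level sets
    set O : ℕ → Set G := fun k => {h : G | (p.1, h • p.2) ∈ C.V k} with hO
    have hOopen : ∀ k, IsOpen (O k) := by
      intro k
      have : Continuous fun h : G => ((p.1, h • p.2) : X × Y) :=
        (continuous_const.prodMk ((continuous_id.smul continuous_const)))
      exact (C.hVopen k).preimage this
    have hOdense : ∀ k, Dense (O k) := by
      intro k
      rw [dense_iff_inter_open]
      intro w hw hwne
      obtain ⟨i, hi⟩ := C.hUbasis w hw hwne
      obtain ⟨l, hlU, hlV⟩ := hp k i
      exact ⟨C.g l, hi hlU, hlV⟩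
    have hd : Dense (⋂ k, O k) := dense_iInter_of_isOpen hOopen hOdense
    obtain ⟨h, hh⟩ := hd.nonempty
    simp only [mem_iInter] at hh
    have hA : (p.1, h • p.2) ∈ C.A := by
      rw [C.hAV]; exact mem_iInter.2 fun k => hh k
    have := C.hInv p.1 h⁻¹ (h • p.2) hA
    rwa [inv_smul_smul, Prod.mk.eta] at this

set_option linter.unusedSectionVars false

/-- Candidate data for one refinement step: `(e', l, r, e'')`. -/
abbrev Cand : Type := (ℕ × ℚ) × ℕ × ℕ × (ℕ × ℚ)

/-- The geometric/witness content of one refinement step. -/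
def Link (x : X) (e : ℕ × ℚ) (k i j : ℕ) (d : Cand) : Prop :=
  0 < d.1.2 ∧ d.1.2 < 1 / (j + 1 : ℚ) ∧
  dist (C.y d.1.1) (C.y e.1) + (d.1.2 : ℝ) < (e.2 : ℝ) ∧
  C.g d.2.1 ∈ C.U i ∧ x ∈ C.P d.2.2.1 ∧
  (C.P d.2.2.1 ×ˢ bl C d.2.2.2 ⊆ C.V k) ∧
  ∀ w : Y, dist w (C.y d.1.1) ≤ (d.1.2 : ℝ) → C.g d.2.1 • w ∈ bl C d.2.2.2

/-- Key step-existence lemma: around any point of a section one can refine. -/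
lemma step_exists (x : X) (z : Y) (hz : (x, z) ∈ C.A) (e : ℕ × ℚ) (hze : z ∈ bl C e)
    (k i j : ℕ) : ∃ d : Cand, z ∈ bl C d.1 ∧ Link C x e k i j d := by
  obtain ⟨l, hlU⟩ := C.hg.exists_mem_open (C.hUopen i) (C.hUne i)
  have hgz : (x, C.g l • z) ∈ C.A := C.hInv x (C.g l) z hz
  have hVz : (x, C.g l • z) ∈ C.V k := A_subset_V C k hgz
  obtain ⟨u, v, hu, hv, hxu, hgzv, huv⟩ := isOpen_prod_iff.1 (C.hVopen k) x (C.g l • z) hVz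
  obtain ⟨r, hxr, hru⟩ := C.hPbasis u hu x hxu
  obtain ⟨ρ, hρ, hball⟩ := Metric.isOpen_iff.1 hv (C.g l • z) hgzv
  obtain ⟨m'', hm''⟩ := C.hy.exists_dist_lt (C.g l • z) (by positivity : (0:ℝ) < ρ/4)
  obtain ⟨q'', hq1'', hq2''⟩ := exists_rat_btwn (by linarith : (ρ/4 : ℝ) < ρ/2)
  have hbe'' : bl C (m'', q'') ⊆ Metric.ball (C.g l • z) ρ := by
    intro w hw
    rw [mem_bl] at hw
    have := dist_triangle w (C.y m'') (C.g l • z)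
    rw [Metric.mem_ball]
    have h1 : dist (C.y m'') (C.g l • z) < ρ/4 := by rw [dist_comm]; exact hm''
    calc dist w (C.g l • z) ≤ dist w (C.y m'') + dist (C.y m'') (C.g l • z) := this
      _ < q'' + ρ/4 := by linarith
      _ < ρ := by linarith
  have hrect : C.P r ×ˢ bl C (m'', q'') ⊆ C.V k := by
    intro p hp
    exact huv ⟨hru hp.1, hball (hbe'' hp.2)⟩
  have hgze'' : C.g l • z ∈ bl C (m'', q'') := by
    rw [mem_bl]; simp only
    calc dist (C.g l • z) (C.y m'') < ρ/4 := hm''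
      _ < q'' := hq1''
  -- continuity of the translation at z
  have hcont : Continuous fun w : Y => C.g l • w := continuous_const.smul continuous_id
  obtain ⟨η, hη, hηball⟩ := Metric.isOpen_iff.1
    ((Metric.isOpen_ball).preimage hcont) z (by simpa [bl] using hgze'')
  have hδ1 : (0:ℝ) < (e.2 : ℝ) - dist z (C.y e.1) := by
    rw [mem_bl] at hze; linarith
  set δ1 : ℝ := (e.2 : ℝ) - dist z (C.y e.1) with hδ1def
  have hj : (0:ℝ) < 1 / (j+1) := by positivity
  set ε0 : ℝ := min η (min δ1 (1/(j+1))) with hε0def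
  have hε0 : 0 < ε0 := lt_min hη (lt_min hδ1 hj)
  obtain ⟨m', hm'⟩ := C.hy.exists_dist_lt z (by positivity : (0:ℝ) < ε0/4)
  obtain ⟨q', hq1', hq2'⟩ := exists_rat_btwn (by linarith : (ε0/4 : ℝ) < ε0/3)
  have hzm' : dist z (C.y m') < ε0/4 := hm'
  refine ⟨((m', q'), l, r, (m'', q'')), ?_, ?_, ?_, ?_, hlU, hxr, hrect, ?_⟩
  · rw [mem_bl]; simp only; linarith
  · have : (0:ℝ) < (q' : ℝ) := by linarith
    exact_mod_cast this
  · have hc : ((1 / (j+1) : ℚ) : ℝ) = 1/(j+1 : ℝ) := by push_cast; ring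
    have : (q' : ℝ) < ((1 / (j+1) : ℚ) : ℝ) := by
      rw [hc]
      have : ε0 ≤ 1/(j+1) := (min_le_right _ _).trans (min_le_right _ _)
      linarith
    exact_mod_cast this
  · simp only
    have h1 : dist (C.y m') (C.y e.1) ≤ dist (C.y m') z + dist z (C.y e.1) :=
      dist_triangle _ _ _
    have h2 : dist (C.y m') z < ε0/4 := by rw [dist_comm]; exact hm'
    have h3 : ε0 ≤ δ1 := (min_le_right _ _).trans (min_le_left _ _)
    have h4 : dist z (C.y e.1) = (e.2 : ℝ) - δ1 := by rw [hδ1def]; ring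
    linarith
  · intro w hw
    simp only at hw ⊢
    have hwz : dist w z < η := by
      have ht : dist w z ≤ dist w (C.y m') + dist (C.y m') z := dist_triangle _ _ _
      have h2 : dist (C.y m') z < ε0/4 := by rw [dist_comm]; exact hm'
      have hε0η : ε0 ≤ η := min_le_left _ _
      have : dist w z < ε0/3 + ε0/4 := by linarith
      linarith
    have := hηball (by rwa [Metric.mem_ball] : w ∈ Metric.ball z η)
    simpa [bl] using this

/-- Orbit-transfer step: find a small true ball around `g l • z`. -/
lemma orbit_step (z : Y) (l j : ℕ) :
    ∃ e' : ℕ × ℚ, 0 < e'.2 ∧ e'.2 < 1 / (j + 1 : ℚ) ∧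
      dist (C.g l • z) (C.y e'.1) < (e'.2 : ℝ) := by
  have hj : (0:ℝ) < 1 / (j+1) := by positivity
  obtain ⟨m', hm'⟩ := C.hy.exists_dist_lt (C.g l • z) (by positivity : (0:ℝ) < (1/(j+1))/4)
  obtain ⟨q', hq1', hq2'⟩ := exists_rat_btwn
    (by linarith : ((1/(j+1):ℝ))/4 < (1/(j+1))/3)
  refine ⟨(m', q'), ?_, ?_, ?_⟩
  · have : (0:ℝ) < (q' : ℝ) := by linarith
    exact_mod_cast this
  · have hc : ((1 / (j+1) : ℚ) : ℝ) = 1/(j+1 : ℝ) := by push_cast; ring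
    have : (q' : ℝ) < ((1 / (j+1) : ℚ) : ℝ) := by rw [hc]; linarith
    exact_mod_cast this
  · simp only
    calc dist (C.g l • z) (C.y m') < (1/(j+1))/4 := hm'
      _ < (q' : ℝ) := hq1'

/-- Limit lemma: any infinite chain of links produces a point of `A` in the first ball. -/
lemma chain_limit (x : X) (ch : ℕ → ℕ × ℚ) (d : ℕ → Cand)
    (h0 : 0 < (ch 0).2)
    (hnext : ∀ t, ch (t + 1) = (d t).1)
    (hL : ∀ t, Link C x (ch t) (Nat.unpair t).1 (Nat.unpair t).2 t (d t)) :
    ∃ z : Y, (x, z) ∈ C.A ∧ z ∈ bl C (ch 0) ∧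
      (∀ t, dist z (C.y (ch t).1) ≤ ((ch t).2 : ℝ)) ∧
      Tendsto (fun t => ((ch t).2 : ℝ)) atTop (𝓝 0) ∧
      Tendsto (fun t => C.y (ch t).1) atTop (𝓝 z) := by
  have hpos : ∀ t, 0 < (ch t).2 := by
    intro t
    cases t with
    | zero => exact h0
    | succ t => rw [hnext t]; exact (hL t).1
  have hposR : ∀ t, (0:ℝ) < ((ch t).2 : ℝ) := fun t => by exact_mod_cast hpos t
  have harr : ∀ t, dist (C.y (ch (t+1)).1) (C.y (ch t).1) + ((ch (t+1)).2 : ℝ)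
      < ((ch t).2 : ℝ) := by
    intro t
    have := (hL t).2.2.1
    rwa [hnext t]
  have hsub : ∀ t, bl C (ch (t+1)) ⊆ bl C (ch t) := by
    intro t w hw
    rw [mem_bl] at hw ⊢
    have h1 := dist_triangle w (C.y (ch (t+1)).1) (C.y (ch t).1)
    have := harr t
    linarith
  have hsub' : ∀ s t, t ≤ s → bl C (ch s) ⊆ bl C (ch t) := by
    intro s t h
    induction s, h using Nat.le_induction with
    | base => exact subset_rfl
    | succ s' hs' ih => exact (hsub s').trans ih
  have hcmem : ∀ t, C.y (ch t).1 ∈ bl C (ch t) := by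
    intro t
    rw [mem_bl, dist_self]
    exact hposR t
  have hdist2 : ∀ s t, t ≤ s → dist (C.y (ch s).1) (C.y (ch t).1) < ((ch t).2 : ℝ) := by
    intro s t h
    have := hsub' s t h (hcmem s)
    rwa [mem_bl] at this
  -- radii tend to zero
  have hrad : ∀ t, ((ch (t+1)).2 : ℝ) ≤ 1/(t+1 : ℝ) := by
    intro t
    have h := (hL t).2.1
    rw [hnext t] at *
    have : ((d t).1.2 : ℝ) < ((1 / (t + 1 : ℚ) : ℚ) : ℝ) := by exact_mod_cast h
    have hc : ((1 / (t + 1 : ℚ) : ℚ) : ℝ) = 1/(t+1 : ℝ) := by push_cast; ring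
    rw [hc] at this
    exact this.le
  have hrt : Tendsto (fun t => ((ch t).2 : ℝ)) atTop (𝓝 0) := by
    have h1 : Tendsto (fun t : ℕ => ((ch (t+1)).2 : ℝ)) atTop (𝓝 0) := by
      apply squeeze_zero (fun t => (hposR (t+1)).le) (fun t => hrad t)
      exact tendsto_one_div_add_atTop_nhds_zero_nat
    exact (tendsto_add_atTop_iff_nat 1).1 h1
  -- Cauchy sequence of centers
  have hcauchy : CauchySeq (fun t => C.y (ch t).1) := by
    apply cauchySeq_of_le_tendsto_0 (fun t => 2 * ((ch t).2 : ℝ))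
    · intro n m N hn hm
      have h1 : dist (C.y (ch n).1) (C.y (ch N).1) ≤ ((ch N).2 : ℝ) := by
        rcases eq_or_lt_of_le hn with h | h
        · subst h; simp only [dist_self]; exact (hposR _).le
        · exact (hdist2 n N hn).le
      have h2 : dist (C.y (ch m).1) (C.y (ch N).1) ≤ ((ch N).2 : ℝ) := by
        rcases eq_or_lt_of_le hm with h | h
        · subst h; simp only [dist_self]; exact (hposR _).le
        · exact (hdist2 m N hm).le
      calc dist (C.y (ch n).1) (C.y (ch m).1)
          ≤ dist (C.y (ch n).1) (C.y (ch N).1) + dist (C.y (ch N).1) (C.y (ch m).1) :=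
            dist_triangle _ _ _
        _ = dist (C.y (ch n).1) (C.y (ch N).1) + dist (C.y (ch m).1) (C.y (ch N).1) := by
            rw [dist_comm (C.y (ch N).1)]
        _ ≤ 2 * ((ch N).2 : ℝ) := by linarith
    · simpa using hrt.const_mul (2:ℝ)
  obtain ⟨z, hz⟩ := cauchySeq_tendsto_of_complete hcauchy
  have hdz : ∀ t, dist z (C.y (ch t).1) ≤ ((ch t).2 : ℝ) := by
    intro t
    have hlim : Tendsto (fun s => dist (C.y (ch s).1) (C.y (ch t).1)) atTop
        (𝓝 (dist z (C.y (ch t).1))) := (hz.dist tendsto_const_nhds)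
    apply le_of_tendsto hlim
    filter_upwards [eventually_ge_atTop t] with s hs
    rcases eq_or_lt_of_le hs with h | _
    · subst h; simp only [dist_self]; exact (hposR _).le
    · exact (hdist2 s t hs).le
  refine ⟨z, ?_, ?_, hdz, hrt, hz⟩
  · -- membership in A via the saturated levels
    rw [star]
    simp only [mem_iInter]
    intro k i
    set t := Nat.pair k i with ht
    have hu1 : (Nat.unpair t).1 = k := by rw [ht, Nat.unpair_pair]
    have hu2 : (Nat.unpair t).2 = i := by rw [ht, Nat.unpair_pair]
    obtain ⟨hp1, hp2, hp3, hp4, hp5, hp6, hp7⟩ := hL t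
    refine ⟨(d t).2.1, by rwa [hu2] at hp4, ?_⟩
    have hzd : dist z (C.y (d t).1.1) ≤ ((d t).1.2 : ℝ) := by
      have := hdz (t+1)
      rwa [hnext t] at this
    have hmem : C.g (d t).2.1 • z ∈ bl C (d t).2.2.2 := hp7 z hzd
    simp only [hu1] at hp6
    exact hp6 ⟨hp5, hmem⟩
  · -- membership in the initial ball
    rw [mem_bl]
    have h1 := hdz 1
    have h2 := harr 0
    have h3 := dist_triangle z (C.y (ch 1).1) (C.y (ch 0).1)
    linarith

/-- Construction of chains from a step-closed predicate. -/
lemma chain_exists (x : X) (Q : ℕ × ℚ → Prop)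
    (hQ : ∀ e, Q e → ∀ t : ℕ, ∃ d : Cand, Q d.1 ∧
        Link C x e (Nat.unpair t).1 (Nat.unpair t).2 t d)
    (e0 : ℕ × ℚ) (hQ0 : Q e0) :
    ∃ (ch : ℕ → ℕ × ℚ) (d : ℕ → Cand), ch 0 = e0 ∧ (∀ t, Q (ch t)) ∧
      (∀ t, ch (t + 1) = (d t).1) ∧
      ∀ t, Link C x (ch t) (Nat.unpair t).1 (Nat.unpair t).2 t (d t) := by
  classical
  let seq : ℕ → {e : ℕ × ℚ // Q e} := fun t =>
    Nat.rec (⟨e0, hQ0⟩ : {e : ℕ × ℚ // Q e})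
      (fun t prev => ⟨(Classical.choose (hQ prev.1 prev.2 t)).1,
        (Classical.choose_spec (hQ prev.1 prev.2 t)).1⟩) t
  refine ⟨fun t => (seq t).1, fun t => Classical.choose (hQ (seq t).1 (seq t).2 t),
    rfl, fun t => (seq t).2, fun t => rfl, fun t =>
      (Classical.choose_spec (hQ (seq t).1 (seq t).2 t)).2⟩

/-- The basic "hit" sets whose measurability is the heart of the theorem. -/
def S (e : ℕ × ℚ) : Set X := {x | ∃ z : Y, (x, z) ∈ C.A ∧ z ∈ bl C e}

/-- The canonical (true) hit-code of a point `x`. -/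
noncomputable def tcode (x : X) : ℕ × ℚ → Bool :=
  fun e => @decide (x ∈ S C e) (Classical.propDecidable _)

lemma tcode_eq_true {x : X} {e : ℕ × ℚ} : tcode C x e = true ↔ x ∈ S C e := by
  simp [tcode, decide_eq_true_iff]

/-- The defining axioms for hit-codes. -/
def PhiP (x : X) (φ : ℕ × ℚ → Bool) : Prop :=
  (∀ e : ℕ × ℚ, φ e = true → 0 < e.2) ∧
  (∃ e : ℕ × ℚ, φ e = true) ∧
  (∀ e : ℕ × ℚ, φ e = true → ∀ t : ℕ, ∃ d : Cand, φ d.1 = true ∧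
      Link C x e (Nat.unpair t).1 (Nat.unpair t).2 t d) ∧
  (∀ e : ℕ × ℚ, φ e = true → ∀ l j : ℕ, ∃ e' : ℕ × ℚ, φ e' = true ∧ 0 < e'.2 ∧
      e'.2 < 1 / (j + 1 : ℚ) ∧ ∃ z : Y, z ∈ bl C e ∧
        dist (C.g l • z) (C.y e'.1) < (e'.2 : ℝ)) ∧
  (∀ e e' : ℕ × ℚ, φ e' = true → dist (C.y e'.1) (C.y e.1) + (e'.2 : ℝ) < (e.2 : ℝ) →
      φ e = true)

/-- The true code satisfies the axioms whenever the section is nonempty. -/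
lemma truth_phi (x : X) (hx : ∃ z : Y, (x, z) ∈ C.A) : PhiP C x (tcode C x) := by
  obtain ⟨z0, hz0⟩ := hx
  refine ⟨?_, ?_, ?_, ?_, ?_⟩
  · intro e he
    rw [tcode_eq_true] at he
    obtain ⟨z, _, hzb⟩ := he
    rw [mem_bl] at hzb
    have h1 : (0:ℝ) < (e.2 : ℝ) := lt_of_le_of_lt dist_nonneg hzb
    exact_mod_cast h1
  · obtain ⟨m, hm⟩ := C.hy.exists_dist_lt z0 one_pos
    refine ⟨(m, 1), ?_⟩
    rw [tcode_eq_true]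
    exact ⟨z0, hz0, by rw [mem_bl]; simpa using hm⟩
  · intro e he t
    rw [tcode_eq_true] at he
    obtain ⟨z, hzA, hzb⟩ := he
    obtain ⟨d, hzd, hlink⟩ := step_exists C x z hzA e hzb (Nat.unpair t).1 (Nat.unpair t).2 t
    exact ⟨d, tcode_eq_true C |>.2 ⟨z, hzA, hzd⟩, hlink⟩
  · intro e he l j
    rw [tcode_eq_true] at he
    obtain ⟨z, hzA, hzb⟩ := he
    obtain ⟨e', h1, h2, h3⟩ := orbit_step C z l j
    refine ⟨e', ?_, h1, h2, z, hzb, h3⟩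
    rw [tcode_eq_true]
    exact ⟨C.g l • z, C.hInv x (C.g l) z hzA, by rwa [mem_bl]⟩
  · intro e e' he' harith
    rw [tcode_eq_true] at he' ⊢
    obtain ⟨z, hzA, hzb⟩ := he'
    rw [mem_bl] at hzb
    refine ⟨z, hzA, ?_⟩
    rw [mem_bl]
    have := dist_triangle z (C.y e'.1) (C.y e.1)
    linarith

/-- Soundness: any code satisfying the axioms produces points of the section,
with a controlled chain. -/
lemma phi_sound (x : X) (φ : ℕ × ℚ → Bool) (h : PhiP C x φ) (e0 : ℕ × ℚ)
    (h0 : φ e0 = true) :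
    ∃ (z : Y) (ch : ℕ → ℕ × ℚ), (x, z) ∈ C.A ∧ z ∈ bl C e0 ∧
      (∀ t, φ (ch t) = true) ∧ (∀ t, dist z (C.y (ch t).1) ≤ ((ch t).2 : ℝ)) ∧
      Tendsto (fun t => ((ch t).2 : ℝ)) atTop (𝓝 0) := by
  obtain ⟨ch, d, hch0, hchQ, hnext, hlink⟩ :=
    chain_exists C x (fun e => φ e = true) h.2.2.1 e0 h0
  have h0' : 0 < (ch 0).2 := h.1 _ (hch0 ▸ h0)
  obtain ⟨z, hzA, hzb, hdz, hrt, _⟩ := chain_limit C x ch d h0' hnext hlink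
  exact ⟨z, ch, hzA, hch0 ▸ hzb, hchQ, hdz, hrt⟩

/-- Uniqueness: the axioms pin the code down to the true one. -/
lemma phi_unique (x : X) (φ : ℕ × ℚ → Bool) (h : PhiP C x φ) : φ = tcode C x := by
  funext e
  have hiff : φ e = true ↔ tcode C x e = true := by
    constructor
    · intro he
      obtain ⟨z, _, hzA, hzb, _, _, _⟩ := phi_sound C x φ h e he
      rw [tcode_eq_true]
      exact ⟨z, hzA, hzb⟩
    · intro he
      rw [tcode_eq_true] at he
      obtain ⟨zs, hzsA, hzsb⟩ := he
      obtain ⟨e0, he0⟩ := h.2.1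
      obtain ⟨z0, ch, hz0A, _, hch, hdz, hrt⟩ := phi_sound C x φ h e0 he0
      rw [mem_bl] at hzsb
      set δ : ℝ := (e.2 : ℝ) - dist zs (C.y e.1) with hδdef
      have hδ : 0 < δ := by rw [hδdef]; linarith
      -- find a group element moving z0 close to zs
      have hcl := C.hDense x z0 zs hz0A hzsA
      rw [Metric.mem_closure_iff] at hcl
      obtain ⟨w, hwmem, hwdist⟩ := hcl (δ/8) (by linarith)
      obtain ⟨g', hg'⟩ := hwmem
      have hOopen : IsOpen {h : G | dist (h • z0) zs < δ/8} := by
        have hc : Continuous fun h : G => h • z0 := continuous_id.smul continuous_const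
        have : {h : G | dist (h • z0) zs < δ/8} =
            (fun h : G => h • z0) ⁻¹' Metric.ball zs (δ/8) := by
          ext h; simp [Metric.mem_ball]
        rw [this]
        exact Metric.isOpen_ball.preimage hc
      have hOne : {h : G | dist (h • z0) zs < δ/8}.Nonempty :=
        ⟨g', by
          have hb : g' • z0 = w := hg'
          simp only [mem_setOf_eq]; rw [hb, dist_comm]; exact hwdist⟩
      obtain ⟨l, hl⟩ := C.hg.exists_mem_open hOopen hOne
      simp only [mem_setOf_eq] at hl
      -- modulus of continuity for `g l • ·` at `z0`
      have hcont : ContinuousAt (fun w : Y => C.g l • w) z0 :=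
        (continuous_const.smul continuous_id).continuousAt
      rw [Metric.continuousAt_iff] at hcont
      obtain ⟨η, hη, hημ⟩ := hcont (δ/8) (by linarith)
      -- choose a fine index j and a late chain stage t
      obtain ⟨j, hj⟩ := exists_nat_one_div_lt (show (0:ℝ) < δ/4 by linarith)
      have hev : ∀ᶠ t in atTop, ((ch t).2 : ℝ) < η/2 :=
        hrt.eventually_lt_const (by linarith)
      obtain ⟨t, ht⟩ := hev.exists
      -- apply the transfer axiom R5
      obtain ⟨e', he', he'pos, he'rad, zw, hzw, hzwd⟩ := h.2.2.2.1 (ch t) (hch t) l j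
      -- estimates
      rw [mem_bl] at hzw
      have hzwz0 : dist zw z0 < η := by
        have h1 := dist_triangle zw (C.y (ch t).1) z0
        have h2 : dist (C.y (ch t).1) z0 ≤ ((ch t).2 : ℝ) := by
          rw [dist_comm]; exact hdz t
        linarith
      have hsm : dist (C.g l • zw) (C.g l • z0) < δ/8 := hημ hzwz0
      have he'radR : (e'.2 : ℝ) < δ/4 := by
        have h1 : (e'.2 : ℝ) < ((1 / (j + 1 : ℚ) : ℚ) : ℝ) := by exact_mod_cast he'rad
        have hc : ((1 / (j + 1 : ℚ) : ℚ) : ℝ) = 1/(j+1 : ℝ) := by push_cast; ring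
        rw [hc] at h1
        linarith
      have harith : dist (C.y e'.1) (C.y e.1) + (e'.2 : ℝ) < (e.2 : ℝ) := by
        have h1 : dist (C.y e'.1) zs ≤ dist (C.y e'.1) (C.g l • zw) +
            dist (C.g l • zw) (C.g l • z0) + dist (C.g l • z0) zs :=
          dist_triangle4 _ _ _ _
        have h2 : dist (C.y e'.1) (C.g l • zw) = dist (C.g l • zw) (C.y e'.1) :=
          dist_comm _ _
        have h3 := dist_triangle (C.y e'.1) zs (C.y e.1)
        have h4 : dist zs (C.y e.1) = (e.2 : ℝ) - δ := by rw [hδdef]; ring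
        linarith
      exact h.2.2.2.2 e e' he' harith
  cases hφ : φ e <;> cases ht : tcode C x e <;> simp_all

section Meas

/-- code space -/
abbrev Cd : Type := ℕ × ℚ → Bool

lemma ms_const {α : Type*} [MeasurableSpace α] (q : Prop) :
    MeasurableSet {_a : α | q} := MeasurableSet.const q

lemma ms_forall {α : Type*} [MeasurableSpace α] {ι : Sort*} [Countable ι]
    {q : ι → α → Prop} (h : ∀ i, MeasurableSet {a | q i a}) :
    MeasurableSet {a | ∀ i, q i a} := by
  rw [Set.setOf_forall]; exact MeasurableSet.iInter h

lemma ms_exists {α : Type*} [MeasurableSpace α] {ι : Sort*} [Countable ι]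
    {q : ι → α → Prop} (h : ∀ i, MeasurableSet {a | q i a}) :
    MeasurableSet {a | ∃ i, q i a} := by
  rw [Set.setOf_exists]; exact MeasurableSet.iUnion h

lemma ms_imp {α : Type*} [MeasurableSpace α] {q r : α → Prop}
    (hq : MeasurableSet {a | q a}) (hr : MeasurableSet {a | r a}) :
    MeasurableSet {a | q a → r a} := by
  have : {a | q a → r a} = {a | q a}ᶜ ∪ {a | r a} := by
    ext a; simp [imp_iff_not_or]
  rw [this]; exact hq.compl.union hr

lemma ms_and {α : Type*} [MeasurableSpace α] {q r : α → Prop}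
    (hq : MeasurableSet {a | q a}) (hr : MeasurableSet {a | r a}) :
    MeasurableSet {a | q a ∧ r a} := by
  have : {a | q a ∧ r a} = {a | q a} ∩ {a | r a} := rfl
  rw [this]; exact hq.inter hr

lemma ms_atom (e : ℕ × ℚ) (b : Bool) :
    MeasurableSet {p : X × Cd | p.2 e = b} := by
  have : {p : X × Cd | p.2 e = b} = (fun p : X × Cd => p.2 e) ⁻¹' {b} := rfl
  rw [this]
  exact ((measurable_pi_apply e).comp measurable_snd) (measurableSet_singleton b)

lemma ms_P (r : ℕ) : MeasurableSet {p : X × Cd | p.1 ∈ C.P r} :=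
  (C.hPopen r).measurableSet.preimage measurable_fst

lemma ms_link (e : ℕ × ℚ) (k i j : ℕ) (d : Cand) :
    MeasurableSet {p : X × Cd | Link C p.1 e k i j d} := by
  have : {p : X × Cd | Link C p.1 e k i j d} =
      {p : X × Cd | (0 < d.1.2 ∧ d.1.2 < 1 / (j + 1 : ℚ) ∧
          dist (C.y d.1.1) (C.y e.1) + (d.1.2 : ℝ) < (e.2 : ℝ) ∧
          C.g d.2.1 ∈ C.U i) ∧ p.1 ∈ C.P d.2.2.1 ∧
          ((C.P d.2.2.1 ×ˢ bl C d.2.2.2 ⊆ C.V k) ∧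
          ∀ w : Y, dist w (C.y d.1.1) ≤ (d.1.2 : ℝ) →
            C.g d.2.1 • w ∈ bl C d.2.2.2)} := by
    ext p; simp only [Link, mem_setOf_eq]; tauto
  rw [this]
  exact ms_and (ms_const _) (ms_and (ms_P C _) (ms_const _))

lemma ms_phi : MeasurableSet {p : X × Cd | PhiP C p.1 p.2} := by
  simp only [PhiP]
  apply ms_and
  · exact ms_forall fun e => ms_imp (ms_atom e true) (ms_const _)
  apply ms_and
  · exact ms_exists fun e => ms_atom e true
  apply ms_and
  · refine ms_forall fun e => ms_imp (ms_atom e true) (ms_forall fun t =>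
      ms_exists fun d : Cand => ms_and (ms_atom d.1 true) (ms_link C e _ _ _ d))
  apply ms_and
  · refine ms_forall fun e => ms_imp (ms_atom e true) (ms_forall fun l =>
      ms_forall fun j => ms_exists fun e' : ℕ × ℚ =>
        ms_and (ms_atom e' true) (ms_const _))
  · refine ms_forall fun e => ms_forall fun e' =>
      ms_imp (ms_atom e' true) (ms_imp (ms_const _) (ms_atom e true))

/-- The heart of the theorem: each hit set is Borel, by Lusin–Souslin applied to the
graph of the (unique) code map. -/
lemma measurable_S (e : ℕ × ℚ) : MeasurableSet (S C e) := by
  have himg : S C e = Prod.fst ''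
      ({p : X × Cd | PhiP C p.1 p.2} ∩ {p : X × Cd | p.2 e = true}) := by
    ext x
    constructor
    · intro hx
      have hxne : ∃ z : Y, (x, z) ∈ C.A := by
        obtain ⟨z, hz, _⟩ := hx
        exact ⟨z, hz⟩
      refine ⟨(x, tcode C x), ⟨truth_phi C x hxne, ?_⟩, rfl⟩
      simp only [mem_setOf_eq]
      exact (tcode_eq_true C).2 hx
    · rintro ⟨p, ⟨hp, hpe⟩, rfl⟩
      simp only [mem_setOf_eq] at hpe
      rw [phi_unique C p.1 p.2 hp] at hpe
      exact (tcode_eq_true C).1 hpe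
  rw [himg]
  haveI : PolishSpace Cd :=
    @instPolishSpaceOfSeparableSpaceOfIsCompletelyMetrizableSpace _ _ inferInstance inferInstance
  apply MeasurableSet.image_of_continuousOn_injOn
    ((ms_phi C).inter (ms_atom e true)) continuous_fst.continuousOn
  intro p hp q hq hpq
  have h1 := phi_unique C p.1 p.2 hp.1
  have h2 := phi_unique C q.1 q.2 hq.1
  have : p.2 = q.2 := by rw [h1, h2, hpq]
  exact Prod.ext hpq this

end Meas

section Selector
open scoped Classical

lemma S_rad_pos {x : X} {e : ℕ × ℚ} (h : x ∈ S C e) : 0 < e.2 := by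
  obtain ⟨z, _, hzb⟩ := h
  rw [mem_bl] at hzb
  have h1 : (0:ℝ) < (e.2 : ℝ) := lt_of_le_of_lt dist_nonneg hzb
  exact_mod_cast h1

/-- measurability from a fiber description by a least-witness search -/
lemma measurable_fiber {α : Type*} [MeasurableSpace α] (f : α → ℕ) (Q : ℕ → Set α)
    (hQ : ∀ n, MeasurableSet (Q n))
    (hf : ∀ a n, f a = n ↔ (a ∈ Q n ∧ (∀ m, m < n → a ∉ Q m) ∧ ∃ n', a ∈ Q n') ∨
        ((∀ m, a ∉ Q m) ∧ n = 0)) : Measurable f := by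
  apply measurable_to_countable'
  intro n
  have hset : f ⁻¹' {n} =
      (Q n ∩ (⋂ m, {a | m < n → a ∉ Q m}) ∩ (⋃ n', Q n')) ∪
      ((⋂ m, (Q m)ᶜ) ∩ {a : α | n = 0}) := by
    ext a
    simp only [mem_preimage, mem_singleton_iff, mem_union, mem_inter_iff, mem_iInter,
      mem_iUnion, mem_setOf_eq, mem_compl_iff, hf a n]
    tauto
  rw [hset]
  refine MeasurableSet.union ?_ ?_
  · exact ((hQ n).inter (MeasurableSet.iInter fun m =>
      ms_imp (ms_const (m < n)) (hQ m).compl)).inter (MeasurableSet.iUnion fun n' => hQ n')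
  · exact (MeasurableSet.iInter fun m => (hQ m).compl).inter (ms_const _)

variable {β : Type} [Encodable β] [Inhabited β]

/-- canonical choice of a witness over a countable type -/
noncomputable def pickD {α : Type*} (Pred : α → β → Prop) (a : α) : β :=
  (Encodable.decode
    (if h : ∃ n, a ∈ {a' | ∃ b : β, Encodable.decode n = some b ∧ Pred a' b}
      then Nat.find h else 0)).getD default

lemma pickD_spec {α : Type*} (Pred : α → β → Prop) (a : α) (ha : ∃ b, Pred a b) :
    Pred a (pickD Pred a) := by
  obtain ⟨b, hb⟩ := ha
  have h : ∃ n, a ∈ {a' | ∃ b : β, Encodable.decode n = some b ∧ Pred a' b} :=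
    ⟨Encodable.encode b, b, Encodable.encodek b, hb⟩
  have hspec := Nat.find_spec h
  obtain ⟨b', hdec, hPred⟩ := hspec
  unfold pickD
  rw [dif_pos h, hdec]
  exact hPred

lemma pickD_meas {α : Type*} [MeasurableSpace α] [MeasurableSpace β] (Pred : α → β → Prop)
    (h : ∀ b, MeasurableSet {a | Pred a b}) : Measurable (pickD Pred) := by
  have hQ : ∀ n, MeasurableSet {a : α | ∃ b : β, Encodable.decode n = some b ∧ Pred a b} := by
    intro n
    rcases hd : (Encodable.decode n : Option β) with _ | b
    · convert MeasurableSet.empty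
      ext a; simp [hd]
    · convert h b using 1
      ext a; simp [hd]
  set Qs : ℕ → Set α := fun n => {a' | ∃ b : β, Encodable.decode n = some b ∧ Pred a' b}
    with hQs
  set F : α → ℕ := fun a => if h : ∃ n, a ∈ Qs n then Nat.find h else 0 with hFdef
  have hFm : Measurable F := by
    apply measurable_fiber F Qs hQ
    intro a n
    by_cases h : ∃ n', a ∈ Qs n'
    · simp only [hFdef, dif_pos h]
      rw [Nat.find_eq_iff h]
      constructor
      · rintro ⟨h1, h2⟩
        exact Or.inl ⟨h1, fun m hm => h2 m hm, h⟩
      · rintro (⟨h1, h2, _⟩ | ⟨h1, _⟩)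
        · exact ⟨h1, fun m hm => h2 m hm⟩
        · obtain ⟨n', hn'⟩ := h
          exact absurd hn' (h1 n')
    · simp only [hFdef, dif_neg h]
      push_neg at h
      constructor
      · intro h0
        exact Or.inr ⟨fun m => h m, h0.symm⟩
      · rintro (⟨_, _, ⟨n', hn'⟩⟩ | ⟨_, h0⟩)
        · exact absurd hn' (h n')
        · exact h0.symm
  have : pickD Pred = (fun n => (Encodable.decode (α := β) n).getD default) ∘ F := rfl
  rw [this]
  exact measurable_from_top.comp hFm

lemma msX_link (e : ℕ × ℚ) (k i j : ℕ) (d : Cand) :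
    MeasurableSet {x : X | Link C x e k i j d} := by
  have : {x : X | Link C x e k i j d} =
      {x : X | (0 < d.1.2 ∧ d.1.2 < 1 / (j + 1 : ℚ) ∧
          dist (C.y d.1.1) (C.y e.1) + (d.1.2 : ℝ) < (e.2 : ℝ) ∧
          C.g d.2.1 ∈ C.U i) ∧ x ∈ C.P d.2.2.1 ∧
          ((C.P d.2.2.1 ×ˢ bl C d.2.2.2 ⊆ C.V k) ∧
          ∀ w : Y, dist w (C.y d.1.1) ≤ (d.1.2 : ℝ) →
            C.g d.2.1 • w ∈ bl C d.2.2.2)} := by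
    ext x; simp only [Link, mem_setOf_eq]; tauto
  rw [this]
  exact ms_and (ms_const _) (ms_and (C.hPopen _).measurableSet (ms_const _))

/-- A good candidate for the next step of the selection recursion. -/
def GoodStep (x : X) (e : ℕ × ℚ) (t : ℕ) (d : Cand) : Prop :=
  x ∈ S C d.1 ∧ Link C x e (Nat.unpair t).1 (Nat.unpair t).2 t d

lemma goodStep_exists {x : X} {e : ℕ × ℚ} (hx : x ∈ S C e) (t : ℕ) :
    ∃ d : Cand, GoodStep C x e t d := by
  obtain ⟨z, hzA, hzb⟩ := hx
  obtain ⟨d, hzd, hlink⟩ := step_exists C x z hzA e hzb (Nat.unpair t).1 (Nat.unpair t).2 t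
  exact ⟨d, ⟨z, hzA, hzd⟩, hlink⟩

lemma goodStep_meas (e : ℕ × ℚ) (t : ℕ) (d : Cand) :
    MeasurableSet {x : X | GoodStep C x e t d} :=
  ms_and (measurable_S C d.1) (msX_link C e _ _ _ d)

noncomputable def nextD (e : ℕ × ℚ) (t : ℕ) : X → Cand :=
  pickD (fun x d => GoodStep C x e t d)

noncomputable def seedE : X → ℕ × ℚ := pickD (fun x e => x ∈ S C e)

/-- The selection recursion. -/
noncomputable def selE : ℕ → X → ℕ × ℚ := fun t =>
  Nat.rec (seedE C) (fun t prev x => (nextD C (prev x) t x).1) t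

noncomputable def selD (t : ℕ) (x : X) : Cand := nextD C (selE C t x) t x

lemma selE_succ (t : ℕ) (x : X) : selE C (t + 1) x = (selD C t x).1 := rfl

lemma sel_invariant {x : X} (hx : ∃ z : Y, (x, z) ∈ C.A) :
    ∀ t, x ∈ S C (selE C t x) := by
  have h0 : x ∈ S C (selE C 0 x) := by
    obtain ⟨z, hz⟩ := hx
    obtain ⟨m, hm⟩ := C.hy.exists_dist_lt z one_pos
    have : ∃ e : ℕ × ℚ, x ∈ S C e :=
      ⟨(m, 1), z, hz, by rw [mem_bl]; simpa using hm⟩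
    exact pickD_spec (fun (x : X) (e : ℕ × ℚ) => x ∈ S C e) x this
  intro t
  induction t with
  | zero => exact h0
  | succ t ih =>
    have := pickD_spec (fun x d => GoodStep C x (selE C t x) t d) x
      (goodStep_exists C ih t)
    exact this.1

lemma sel_link {x : X} (hx : ∃ z : Y, (x, z) ∈ C.A) (t : ℕ) :
    Link C x (selE C t x) (Nat.unpair t).1 (Nat.unpair t).2 t (selD C t x) := by
  have := pickD_spec (fun x d => GoodStep C x (selE C t x) t d) x
    (goodStep_exists C (sel_invariant C hx t) t)
  exact this.2

lemma nextD_meas (e : ℕ × ℚ) (t : ℕ) : Measurable (nextD C e t) :=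
  pickD_meas _ (fun d => goodStep_meas C e t d)

set_option maxHeartbeats 1000000 in
lemma selE_meas : ∀ t, Measurable (selE C t) := by
  intro t
  induction t with
  | zero => exact pickD_meas _ (fun e => measurable_S C e)
  | succ t ih =>
    apply measurable_to_countable'
    intro e'
    have hpre : selE C (t+1) ⁻¹' {e'} =
        ⋃ e : ℕ × ℚ, {x | selE C t x = e} ∩ {x | (nextD C e t x).1 = e'} := by
      ext x
      simp only [mem_preimage, mem_singleton_iff, mem_iUnion, mem_inter_iff, mem_setOf_eq]
      constructor
      · intro h
        exact ⟨selE C t x, rfl, h⟩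
      · rintro ⟨e, he, h2⟩
        show (nextD C (selE C t x) t x).1 = e'
        rw [he]; exact h2
    rw [hpre]
    apply MeasurableSet.iUnion
    intro e
    have h1 : MeasurableSet {x | selE C t x = e} := ih (measurableSet_singleton e)
    have h2 : MeasurableSet {x | (nextD C e t x).1 = e'} :=
      (measurable_fst.comp (nextD_meas C e t)) (measurableSet_singleton e')
    exact h1.inter h2

/-- Convergence of the selection recursion on the projection. -/
lemma sel_conv {x : X} (hx : ∃ z : Y, (x, z) ∈ C.A) :
    ∃ z : Y, (x, z) ∈ C.A ∧
      Tendsto (fun t => C.y (selE C t x).1) atTop (𝓝 z) := by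
  obtain ⟨z, hzA, _, _, _, hconv⟩ := chain_limit C x (fun t => selE C t x)
    (fun t => selD C t x) (S_rad_pos C (sel_invariant C hx 0))
    (fun t => selE_succ C t x) (fun t => sel_link C hx t)
  exact ⟨z, hzA, hconv⟩

end Selector

end HomSel

open TopologicalSpace MeasureTheory Filter Topology Set


open TopologicalSpace MeasureTheory Filter Topology Set


/-- **Theorem (homogeneous selection principle, part 2).** Let `X, Y` be Polish spaces with a
complete compatible metric `d_Y` on `Y`, let `A ⊆ X × Y` be `G_δ`, and let `(y_n)` be dense in
`Y`.  Suppose the Polish group `G` acts continuously on `Y` so that each section `A_x` is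
`G`-invariant and every `G`-orbit of a point of `A_x` is dense in `A_x`.  Then the set
`R = {(x, n, ε) ∈ X × ℕ × ℚ₊ : ∃ y ∈ A_x, d_Y(y, y_n) < ε}` is Borel (being simultaneously
analytic and coanalytic), and consequently `proj_X(A)` is Borel and `A` admits a Borel
uniformization. -/
theorem gdelta_borel_uniformization_of_group
    (X Y G : Type) [TopologicalSpace X] [PolishSpace X] [MeasurableSpace X] [BorelSpace X]
    [MetricSpace Y] [CompleteSpace Y] [SeparableSpace Y] [MeasurableSpace Y] [BorelSpace Y]
    [Group G] [TopologicalSpace G] [IsTopologicalGroup G] [PolishSpace G]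
    [MulAction G Y] [ContinuousSMul G Y]
    (A : Set (X × Y)) (hA : IsGδ A)
    (hInv : ∀ (x : X) (g : G) (z : Y), (x, z) ∈ A → (x, g • z) ∈ A)
    (hDense : ∀ (x : X) (z w : Y), (x, z) ∈ A → (x, w) ∈ A →
      w ∈ closure (Set.range fun g : G => g • z))
    (y : ℕ → Y) (hy : DenseRange y)
    (R : Set (X × ℕ × ℚ))
    (hR : R = {p : X × ℕ × ℚ | 0 < p.2.2 ∧ ∃ z : Y, (p.1, z) ∈ A ∧ dist z (y p.2.1) < (p.2.2 : ℝ)}) :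
    MeasureTheory.AnalyticSet R ∧ MeasureTheory.AnalyticSet Rᶜ ∧ MeasurableSet R ∧
    MeasurableSet {x : X | ∃ z : Y, (x, z) ∈ A} ∧
    ∃ f : {x : X | ∃ z : Y, (x, z) ∈ A} → Y,
      Measurable f ∧ ∀ x : {x : X | ∃ z : Y, (x, z) ∈ A}, ((x : X), f x) ∈ A := by
    classical
  haveI : Nonempty G := ⟨1⟩
  -- extract an open presentation of the Gδ set
  obtain ⟨Ts, hTopen, hTc, hTeq⟩ := hA
  obtain ⟨V, hV⟩ := (hTc.insert univ).exists_eq_range (insert_nonempty _ _)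
  have hVopen : ∀ k, IsOpen (V k) := by
    intro k
    have hk : V k ∈ insert univ Ts := by rw [hV]; exact mem_range_self k
    rcases mem_insert_iff.1 hk with h | h
    · rw [h]; exact isOpen_univ
    · exact hTopen _ h
  have hAV : A = ⋂ k, V k := by
    have h1 : ⋂ k, V k = ⋂₀ (insert univ Ts) := by rw [hV, sInter_range]
    rw [h1, sInter_insert, univ_inter, hTeq]
  -- countable basis of X (with junk ∅ added for enumeration)
  obtain ⟨P, hP⟩ := ((countable_countableBasis X).insert ∅).exists_eq_range
    (insert_nonempty _ _)
  have hPopen : ∀ r, IsOpen (P r) := by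
    intro r
    have hk : P r ∈ insert ∅ (countableBasis X) := by rw [hP]; exact mem_range_self r
    rcases mem_insert_iff.1 hk with h | h
    · rw [h]; exact isOpen_empty
    · exact isOpen_of_mem_countableBasis h
  have hPbasis : ∀ u : Set X, IsOpen u → ∀ x ∈ u, ∃ r, x ∈ P r ∧ P r ⊆ u := by
    intro u hu x hxu
    obtain ⟨v, hvb, hxv, hvu⟩ :=
      (isBasis_countableBasis X).exists_subset_of_mem_open hxu hu
    have : v ∈ insert ∅ (countableBasis X) := mem_insert_of_mem _ hvb
    rw [hP] at this
    obtain ⟨r, hr⟩ := this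
    exact ⟨r, by rw [hr]; exact hxv, by rw [hr]; exact hvu⟩
  -- countable basis of nonempty opens of G
  have hGU : {u : Set G | u ∈ countableBasis G ∧ u.Nonempty}.Countable :=
    (countable_countableBasis G).mono (fun u hu => hu.1)
  have hGUne : {u : Set G | u ∈ countableBasis G ∧ u.Nonempty}.Nonempty := by
    obtain ⟨v, hvb, hxv, _⟩ :=
      (isBasis_countableBasis G).exists_subset_of_mem_open (mem_univ (1 : G)) isOpen_univ
    exact ⟨v, hvb, ⟨1, hxv⟩⟩
  obtain ⟨U, hU⟩ := hGU.exists_eq_range hGUne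
  have hUmem : ∀ i, U i ∈ countableBasis G ∧ (U i).Nonempty := by
    intro i
    have : U i ∈ {u : Set G | u ∈ countableBasis G ∧ u.Nonempty} := by
      rw [hU]; exact mem_range_self i
    exact this
  have hUopen : ∀ i, IsOpen (U i) := fun i => isOpen_of_mem_countableBasis (hUmem i).1
  have hUne : ∀ i, (U i).Nonempty := fun i => (hUmem i).2
  have hUbasis : ∀ w : Set G, IsOpen w → w.Nonempty → ∃ i, U i ⊆ w := by
    intro w hw ⟨x, hxw⟩
    obtain ⟨v, hvb, hxv, hvw⟩ :=
      (isBasis_countableBasis G).exists_subset_of_mem_open hxw hw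
    have : v ∈ {u : Set G | u ∈ countableBasis G ∧ u.Nonempty} := ⟨hvb, ⟨x, hxv⟩⟩
    rw [hU] at this
    obtain ⟨i, hi⟩ := this
    exact ⟨i, by rw [hi]; exact hvw⟩
  -- countable dense sequence in G
  obtain ⟨sG, hsGc, hsGd⟩ := exists_countable_dense G
  obtain ⟨g, hg⟩ := hsGc.exists_eq_range hsGd.nonempty
  have hgdr : DenseRange g := by rw [DenseRange, ← hg]; exact hsGd
  -- assemble the context
  let C : HomSel.Ctx X Y G :=
    ⟨A, V, hVopen, hAV, hInv, hDense, y, hy, P, hPopen, hPbasis, U, hUopen, hUne,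
      hUbasis, g, hgdr⟩
  have hSmeas : ∀ e : ℕ × ℚ, MeasurableSet (HomSel.S C e) := HomSel.measurable_S C
  -- measurability of the projection
  have hproj : {x : X | ∃ z : Y, (x, z) ∈ A} = ⋃ m : ℕ, HomSel.S C (m, 1) := by
    ext x
    simp only [mem_setOf_eq, mem_iUnion]
    constructor
    · rintro ⟨z, hz⟩
      obtain ⟨m, hm⟩ := hy.exists_dist_lt z one_pos
      refine ⟨m, z, hz, ?_⟩
      rw [HomSel.mem_bl]
      simpa using hm
    · rintro ⟨m, z, hz, _⟩
      exact ⟨z, hz⟩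
  have hprojmeas : MeasurableSet {x : X | ∃ z : Y, (x, z) ∈ A} := by
    rw [hproj]
    exact MeasurableSet.iUnion fun m => hSmeas (m, 1)
  -- the decomposition of R into slices
  have hRdec : R = ⋃ p : ℕ × ℚ,
      ({x : X | 0 < p.2 ∧ x ∈ HomSel.S C p} ×ˢ ({p} : Set (ℕ × ℚ))) := by
    rw [hR]
    ext q
    obtain ⟨x, n, ε⟩ := q
    simp only [mem_setOf_eq, mem_iUnion, mem_prod, mem_singleton_iff]
    constructor
    · rintro ⟨hε, z, hz, hd⟩
      exact ⟨(n, ε), ⟨hε, z, hz, by rw [HomSel.mem_bl]; exact hd⟩, rfl⟩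
    · rintro ⟨p, ⟨hp, z, hz, hd⟩, hpe⟩
      cases hpe
      rw [HomSel.mem_bl] at hd
      exact ⟨hp, z, hz, hd⟩
  have hslice : ∀ p : ℕ × ℚ, MeasurableSet {x : X | 0 < p.2 ∧ x ∈ HomSel.S C p} :=
    fun p => HomSel.ms_and (HomSel.ms_const _) (hSmeas p)
  have hRmeas : MeasurableSet R := by
    rw [hRdec]
    exact MeasurableSet.iUnion fun p => (hslice p).prod (measurableSet_singleton p)
  -- analytic sets
  have hAnal : ∀ (s : Set X), MeasurableSet s → ∀ p : ℕ × ℚ,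
      MeasureTheory.AnalyticSet (s ×ˢ ({p} : Set (ℕ × ℚ))) := by
    intro s hs p
    have himg : s ×ˢ ({p} : Set (ℕ × ℚ)) = (fun x => (x, p)) '' s := by
      ext q
      simp only [mem_prod, mem_singleton_iff, mem_image]
      constructor
      · rintro ⟨h1, h2⟩
        exact ⟨q.1, h1, by rw [← h2]⟩
      · rintro ⟨x, hx, rfl⟩
        exact ⟨hx, rfl⟩
    rw [himg]
    exact hs.analyticSet.image_of_continuous (continuous_id.prodMk continuous_const)
  have hRanal : MeasureTheory.AnalyticSet R := by
    rw [hRdec]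
    exact MeasureTheory.AnalyticSet.iUnion fun p => hAnal _ (hslice p) p
  have hRcanal : MeasureTheory.AnalyticSet Rᶜ := by
    have hcdec : Rᶜ = ⋃ p : ℕ × ℚ,
        ({x : X | 0 < p.2 ∧ x ∈ HomSel.S C p}ᶜ ×ˢ ({p} : Set (ℕ × ℚ))) := by
      ext q
      obtain ⟨x, n, ε⟩ := q
      rw [mem_compl_iff, hRdec]
      simp only [mem_iUnion, mem_prod, mem_singleton_iff, mem_compl_iff, mem_setOf_eq]
      constructor
      · intro h
        refine ⟨(n, ε), fun hc => h ⟨(n, ε), hc, rfl⟩, rfl⟩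
      · rintro ⟨p, hp, hpe⟩ ⟨p', hp', hpe'⟩
        cases hpe
        cases hpe'
        exact hp hp'
    rw [hcdec]
    exact MeasureTheory.AnalyticSet.iUnion fun p => hAnal _ (hslice p).compl p
  refine ⟨hRanal, hRcanal, hRmeas, hprojmeas, ?_⟩
  -- the measurable uniformizing function
  have hconv : ∀ x : {x : X | ∃ z : Y, (x, z) ∈ A}, ∃ z : Y, (x.1, z) ∈ A ∧
      Tendsto (fun t => y (HomSel.selE C t x.1).1) atTop (𝓝 z) :=
    fun x => HomSel.sel_conv C x.2
  refine ⟨fun x => (hconv x).choose, ?_, fun x => ((hconv x).choose_spec).1⟩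
  apply measurable_of_tendsto_metrizable'
    (f := fun t (x : {x : X | ∃ z : Y, (x, z) ∈ A}) => y (HomSel.selE C t x.1).1) atTop
  · intro t
    have h1 : Measurable (fun x : X => y (HomSel.selE C t x).1) :=
      (measurable_from_top (f := y)).comp
        (measurable_fst.comp (HomSel.selE_meas C t))
    exact h1.comp measurable_subtype_coe
  · rw [tendsto_pi_nhds]
    intro x
    exact ((hconv x).choose_spec).2
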